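/- R(K_3, K_{10} - D_{3,3}) = 28, given that R(K_3, K_8) = 28. -/

import Mathlib

open SimpleGraph

/-- `H` is contained in `G` as a (not necessarily induced) subgraph. -/
def Contains {α β : Type*} (H : SimpleGraph α) (G : SimpleGraph β) : Prop :=
  ∃ f : α → β, Function.Injective f ∧ ∀ ⦃a b⦄, H.Adj a b → G.Adj (f a) (f b)

/-- Every graph on `r` vertices contains a triangle or contains `H` in its complement. -/
def RamseyProp {β : Type*} (H : SimpleGraph β) (r : ℕ) : Prop :=
  ∀ F : SimpleGraph (Fin r), ¬ F.CliqueFree 3 ∨ Contains H Fᶜ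

/-- `R` is the triangle Ramsey number `R(K_3, H)`. -/
def TriRamsey {β : Type*} (H : SimpleGraph β) (R : ℕ) : Prop :=
  IsLeast {r : ℕ | RamseyProp H r} R

/-- `K_k` minus the edges of the double star `D_{m,m}`: centers `0` and `1` are
adjacent, `0` has the extra leaves `2,…,m+1` and `1` has the extra leaves
`m+2,…,2m+1`. -/
def KnMinusDoubleStar (k m : ℕ) : SimpleGraph (Fin k) :=
  (SimpleGraph.fromRel (fun a b : Fin k =>
    (a.val = 0 ∧ b.val = 1) ∨
    (a.val = 0 ∧ 2 ≤ b.val ∧ b.val ≤ m + 1) ∨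
    (a.val = 1 ∧ m + 2 ≤ b.val ∧ b.val ≤ 2 * m + 1)))ᶜ

section Helpers

open Finset

def Ind (F : SimpleGraph (Fin 28)) (J : Finset (Fin 28)) : Prop :=
  ∀ a ∈ J, ∀ b ∈ J, ¬ F.Adj a b

variable {F : SimpleGraph (Fin 28)}

lemma Ind.mono {J J' : Finset (Fin 28)} (h : J' ⊆ J) (hJ : Ind F J) : Ind F J' :=
  fun a ha b hb => hJ a (h ha) b (h hb)

lemma no_triangle (hF : F.CliqueFree 3) {a b c : Fin 28} (hab : F.Adj a b)
    (hac : F.Adj a c) (hbc : F.Adj b c) : False :=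
  hF {a, b, c} (SimpleGraph.is3Clique_triple_iff.2 ⟨hab, hac, hbc⟩)

lemma nonadj_of_common (hF : F.CliqueFree 3) {a b c : Fin 28} (hac : F.Adj a c)
    (hbc : F.Adj b c) : ¬ F.Adj a b :=
  fun hab => no_triangle hF hab hac hbc

lemma Ind.insert {J : Finset (Fin 28)} (hJ : Ind F J) {a : Fin 28}
    (ha : ∀ b ∈ J, ¬ F.Adj a b) : Ind F (Insert.insert a J) := by
  intro x hx y hy
  rcases Finset.mem_insert.1 hx with h1 | h1 <;> rcases Finset.mem_insert.1 hy with h2 | h2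
  · subst h1; subst h2; exact F.irrefl
  · subst h1; exact ha y h2
  · subst h2; exact fun h => ha x h1 (F.adj_symm h)
  · exact hJ x h1 y h2

variable [DecidableRel F.Adj]

lemma count_swap (A B : Finset (Fin 28)) :
    ∑ u ∈ B, (A.filter (F.Adj u)).card = ∑ v ∈ A, (B.filter (F.Adj v)).card := by
  simp only [Finset.card_filter]
  rw [Finset.sum_comm]
  refine Finset.sum_congr rfl fun v _ => Finset.sum_congr rfl fun u _ => ?_
  simp only [F.adj_comm]

def GoodPair (F : SimpleGraph (Fin 28)) [DecidableRel F.Adj]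
    (J : Finset (Fin 28)) (u w : Fin 28) : Prop :=
  Ind F J ∧ J.card = 8 ∧ u ∉ J ∧ w ∉ J ∧ u ≠ w ∧
    (J.filter (F.Adj u)).card ≤ 3 ∧ (J.filter (F.Adj w)).card ≤ 3 ∧
    (J.filter (F.Adj u)) ∩ (J.filter (F.Adj w)) = ∅

lemma empty_trace_contra (hNo9 : ∀ J', Ind F J' → J'.card ≤ 8) {J : Finset (Fin 28)}
    {w : Fin 28} (hJ : Ind F J) (hJc : J.card = 8) (hw : w ∉ J)
    (ht : J.filter (F.Adj w) = ∅) : False := by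
  have hind : Ind F (Insert.insert w J) := hJ.insert (fun b hb hadj =>
    Finset.notMem_empty b (ht ▸ Finset.mem_filter.2 ⟨hb, hadj⟩))
  have h9 := hNo9 _ hind
  rw [Finset.card_insert_of_notMem hw, hJc] at h9
  omega

lemma singleton_pair_contra (hF : F.CliqueFree 3) (hNo9 : ∀ J', Ind F J' → J'.card ≤ 8)
    {J : Finset (Fin 28)} {w1 w2 y : Fin 28} (hJ : Ind F J) (hJc : J.card = 8)
    (h1 : w1 ∉ J) (h2 : w2 ∉ J) (hne : w1 ≠ w2)
    (ht1 : J.filter (F.Adj w1) = {y}) (ht2 : J.filter (F.Adj w2) = {y}) : False := by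
  have hy1 : y ∈ J.filter (F.Adj w1) := ht1 ▸ Finset.mem_singleton_self y
  have hy2 : y ∈ J.filter (F.Adj w2) := ht2 ▸ Finset.mem_singleton_self y
  have hyJ : y ∈ J := (Finset.mem_filter.1 hy1).1
  have hadj1 : F.Adj w1 y := (Finset.mem_filter.1 hy1).2
  have hadj2 : F.Adj w2 y := (Finset.mem_filter.1 hy2).2
  have hnadj : ¬ F.Adj w2 w1 := nonadj_of_common hF hadj2 hadj1
  have hJ3ind : Ind F (Insert.insert w1 (J.erase y)) :=
    (Ind.mono (Finset.erase_subset _ _) hJ).insert (fun b hb hadj => by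
      have hbJ := Finset.mem_erase.1 hb
      have hmem : b ∈ J.filter (F.Adj w1) := Finset.mem_filter.2 ⟨hbJ.2, hadj⟩
      rw [ht1] at hmem
      exact hbJ.1 (Finset.mem_singleton.1 hmem))
  have hfin : Ind F (Insert.insert w2 (Insert.insert w1 (J.erase y))) :=
    hJ3ind.insert (fun b hb hadj => by
      rcases Finset.mem_insert.1 hb with h' | h'
      · subst h'; exact hnadj hadj
      · have hbJ := Finset.mem_erase.1 h'
        have hmem : b ∈ J.filter (F.Adj w2) := Finset.mem_filter.2 ⟨hbJ.2, hadj⟩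
        rw [ht2] at hmem
        exact hbJ.1 (Finset.mem_singleton.1 hmem))
  have hw1J3 : w1 ∉ J.erase y := fun h => h1 (Finset.erase_subset _ _ h)
  have hw2ins : w2 ∉ Insert.insert w1 (J.erase y) := by
    intro h
    rcases Finset.mem_insert.1 h with h' | h'
    · exact hne h'.symm
    · exact h2 (Finset.erase_subset _ _ h')
  have h9 := hNo9 _ hfin
  rw [Finset.card_insert_of_notMem hw2ins, Finset.card_insert_of_notMem hw1J3,
    Finset.card_erase_of_mem hyJ, hJc] at h9
  omega

lemma KMD_adj {a b : Fin 10} : (KnMinusDoubleStar 10 3).Adj a b ↔ a ≠ b ∧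
    ¬((a.val = 0 ∧ b.val = 1) ∨ (a.val = 0 ∧ 2 ≤ b.val ∧ b.val ≤ 4) ∨
      (a.val = 1 ∧ 5 ≤ b.val ∧ b.val ≤ 7) ∨
      (b.val = 0 ∧ a.val = 1) ∨ (b.val = 0 ∧ 2 ≤ a.val ∧ a.val ≤ 4) ∨
      (b.val = 1 ∧ 5 ≤ a.val ∧ a.val ≤ 7)) := by
  rw [KnMinusDoubleStar, SimpleGraph.compl_adj, SimpleGraph.fromRel_adj]
  constructor
  · rintro ⟨h1, h2⟩
    refine ⟨h1, fun h => h2 ⟨h1, ?_⟩⟩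
    omega
  · rintro ⟨h1, h2⟩
    refine ⟨h1, fun h => h2 ?_⟩
    rcases h with ⟨-, h⟩
    omega

lemma KMD_cases {a b : Fin 10} (h : (KnMinusDoubleStar 10 3).Adj a b) :
    (2 ≤ a.val ∧ 2 ≤ b.val) ∨ (a.val = 0 ∧ 5 ≤ b.val) ∨ (b.val = 0 ∧ 5 ≤ a.val) ∨
    (a.val = 1 ∧ (2 ≤ b.val ∧ b.val ≤ 4 ∨ 8 ≤ b.val)) ∨
    (b.val = 1 ∧ (2 ≤ a.val ∧ a.val ≤ 4 ∨ 8 ≤ a.val)) := by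
  rw [KMD_adj] at h
  obtain ⟨h1, h2⟩ := h
  have ha := a.isLt
  have hb := b.isLt
  have hne : a.val ≠ b.val := fun hh => h1 (Fin.val_injective hh)
  omega


/-- The embedding function used to realise a good pair. -/
def pick (u w x2 x3 x4 x5 x6 x7 x8 x9 : Fin 28) : Fin 10 → Fin 28 := fun i =>
  if i.val = 0 then u else if i.val = 1 then w else if i.val = 2 then x2 else
  if i.val = 3 then x3 else if i.val = 4 then x4 else if i.val = 5 then x5 else
  if i.val = 6 then x6 else if i.val = 7 then x7 else if i.val = 8 then x8 else x9

set_option maxHeartbeats 1000000 in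
lemma contains_of_goodPair {F : SimpleGraph (Fin 28)} [DecidableRel F.Adj]
    {J : Finset (Fin 28)} {u w : Fin 28}
    (hJ : Ind F J) (hJc : J.card = 8) (huJ : u ∉ J) (hwJ : w ∉ J) (huw : u ≠ w)
    (hu3 : (J.filter (F.Adj u)).card ≤ 3) (hw3 : (J.filter (F.Adj w)).card ≤ 3)
    (hdisj : (J.filter (F.Adj u)) ∩ (J.filter (F.Adj w)) = ∅) :
    Contains (KnMinusDoubleStar 10 3) Fᶜ := by
  classical
  set Au := J.filter (F.Adj u) with hAu
  set Aw := J.filter (F.Adj w) with hAw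
  have hAuJ : Au ⊆ J := Finset.filter_subset _ _
  have hAwJ : Aw ⊆ J := Finset.filter_subset _ _
  -- enlarge Au to a 3-set inside J \ Aw
  have hAusub : Au ⊆ J \ Aw := by
    intro x hx
    rcases Finset.mem_filter.1 hx with ⟨hxJ, hxu⟩
    refine Finset.mem_sdiff.2 ⟨hxJ, fun hxw => ?_⟩
    have : x ∈ Au ∩ Aw := Finset.mem_inter.2 ⟨hx, hxw⟩
    rw [hdisj] at this; exact absurd this (Finset.notMem_empty x)
  have hcard1 : (J \ Aw).card = 8 - Aw.card := by
    rw [Finset.card_sdiff_of_subset hAwJ, hJc]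
  obtain ⟨Au', hAuAu', hAu'sub, hAu'card⟩ :=
    Finset.exists_subsuperset_card_eq hAusub hu3 (by rw [hcard1]; omega)
  have hAu'J : Au' ⊆ J := hAu'sub.trans (Finset.sdiff_subset)
  have hAwsub : Aw ⊆ J \ Au' := by
    intro x hx
    refine Finset.mem_sdiff.2 ⟨hAwJ hx, fun hxu => ?_⟩
    exact absurd hx (Finset.mem_sdiff.1 (hAu'sub hxu)).2
  obtain ⟨Aw', hAwAw', hAw'sub, hAw'card⟩ :=
    Finset.exists_subsuperset_card_eq hAwsub hw3
      (by rw [Finset.card_sdiff_of_subset hAu'J, hJc, hAu'card]; omega)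
  have hAw'J : Aw' ⊆ J := hAw'sub.trans (Finset.sdiff_subset)
  have hAA : Disjoint Au' Aw' := by
    rw [Finset.disjoint_right]
    exact fun {x} hx hx' => (Finset.mem_sdiff.1 (hAw'sub hx)).2 hx'
  set R := (J \ Au') \ Aw' with hR
  have hRsub : R ⊆ J := (Finset.sdiff_subset).trans (Finset.sdiff_subset)
  have hRcard : R.card = 2 := by
    rw [hR, Finset.card_sdiff_of_subset (by rw [Finset.subset_sdiff]; exact ⟨hAw'J, hAA.symm⟩),
      Finset.card_sdiff_of_subset hAu'J, hJc, hAu'card, hAw'card]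
  obtain ⟨x2, x3, x4, h23, h24, h34, hAu'eq⟩ := Finset.card_eq_three.1 hAu'card
  obtain ⟨x5, x6, x7, h56, h57, h67, hAw'eq⟩ := Finset.card_eq_three.1 hAw'card
  obtain ⟨x8, x9, h89, hReq⟩ := Finset.card_eq_two.1 hRcard
  -- membership facts
  have hx2 : x2 ∈ Au' := by rw [hAu'eq]; simp
  have hx3 : x3 ∈ Au' := by rw [hAu'eq]; simp
  have hx4 : x4 ∈ Au' := by rw [hAu'eq]; simp
  have hx5 : x5 ∈ Aw' := by rw [hAw'eq]; simp
  have hx6 : x6 ∈ Aw' := by rw [hAw'eq]; simp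
  have hx7 : x7 ∈ Aw' := by rw [hAw'eq]; simp
  have hx8 : x8 ∈ R := by rw [hReq]; simp
  have hx9 : x9 ∈ R := by rw [hReq]; simp
  set f := pick u w x2 x3 x4 x5 x6 x7 x8 x9 with hf
  have m2 : x2 ∈ J := hAu'J hx2
  have m3 : x3 ∈ J := hAu'J hx3
  have m4 : x4 ∈ J := hAu'J hx4
  have m5 : x5 ∈ J := hAw'J hx5
  have m6 : x6 ∈ J := hAw'J hx6
  have m7 : x7 ∈ J := hAw'J hx7
  have m8 : x8 ∈ J := hRsub hx8
  have m9 : x9 ∈ J := hRsub hx9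
  have n52 : x5 ∉ Au' := fun h => hAA.forall_ne_finset h hx5 rfl
  have n62 : x6 ∉ Au' := fun h => hAA.forall_ne_finset h hx6 rfl
  have n72 : x7 ∉ Au' := fun h => hAA.forall_ne_finset h hx7 rfl
  have n82 : x8 ∉ Au' := fun h => (Finset.mem_sdiff.1 (Finset.mem_sdiff.1 hx8).1).2 h
  have n92 : x9 ∉ Au' := fun h => (Finset.mem_sdiff.1 (Finset.mem_sdiff.1 hx9).1).2 h
  have n85 : x8 ∉ Aw' := fun h => (Finset.mem_sdiff.1 hx8).2 h
  have n95 : x9 ∉ Aw' := fun h => (Finset.mem_sdiff.1 hx9).2 h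
  have du2 : u ≠ x2 := fun h => huJ (h ▸ m2)
  have dw2 : w ≠ x2 := fun h => hwJ (h ▸ m2)
  have du3 : u ≠ x3 := fun h => huJ (h ▸ m3)
  have dw3 : w ≠ x3 := fun h => hwJ (h ▸ m3)
  have du4 : u ≠ x4 := fun h => huJ (h ▸ m4)
  have dw4 : w ≠ x4 := fun h => hwJ (h ▸ m4)
  have du5 : u ≠ x5 := fun h => huJ (h ▸ m5)
  have dw5 : w ≠ x5 := fun h => hwJ (h ▸ m5)
  have du6 : u ≠ x6 := fun h => huJ (h ▸ m6)
  have dw6 : w ≠ x6 := fun h => hwJ (h ▸ m6)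
  have du7 : u ≠ x7 := fun h => huJ (h ▸ m7)
  have dw7 : w ≠ x7 := fun h => hwJ (h ▸ m7)
  have du8 : u ≠ x8 := fun h => huJ (h ▸ m8)
  have dw8 : w ≠ x8 := fun h => hwJ (h ▸ m8)
  have du9 : u ≠ x9 := fun h => huJ (h ▸ m9)
  have dw9 : w ≠ x9 := fun h => hwJ (h ▸ m9)
  have d25 : x2 ≠ x5 := fun h => n52 (h ▸ hx2)
  have d26 : x2 ≠ x6 := fun h => n62 (h ▸ hx2)
  have d27 : x2 ≠ x7 := fun h => n72 (h ▸ hx2)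
  have d28 : x2 ≠ x8 := fun h => n82 (h ▸ hx2)
  have d29 : x2 ≠ x9 := fun h => n92 (h ▸ hx2)
  have d35 : x3 ≠ x5 := fun h => n52 (h ▸ hx3)
  have d36 : x3 ≠ x6 := fun h => n62 (h ▸ hx3)
  have d37 : x3 ≠ x7 := fun h => n72 (h ▸ hx3)
  have d38 : x3 ≠ x8 := fun h => n82 (h ▸ hx3)
  have d39 : x3 ≠ x9 := fun h => n92 (h ▸ hx3)
  have d45 : x4 ≠ x5 := fun h => n52 (h ▸ hx4)
  have d46 : x4 ≠ x6 := fun h => n62 (h ▸ hx4)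
  have d47 : x4 ≠ x7 := fun h => n72 (h ▸ hx4)
  have d48 : x4 ≠ x8 := fun h => n82 (h ▸ hx4)
  have d49 : x4 ≠ x9 := fun h => n92 (h ▸ hx4)
  have d58 : x5 ≠ x8 := fun h => n85 (h ▸ hx5)
  have d59 : x5 ≠ x9 := fun h => n95 (h ▸ hx5)
  have d68 : x6 ≠ x8 := fun h => n85 (h ▸ hx6)
  have d69 : x6 ≠ x9 := fun h => n95 (h ▸ hx6)
  have d78 : x7 ≠ x8 := fun h => n85 (h ▸ hx7)
  have d79 : x7 ≠ x9 := fun h => n95 (h ▸ hx7)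
  have hfJ : ∀ i : Fin 10, 2 ≤ i.val → f i ∈ J := by
    intro i hi
    obtain ⟨iv, hlt⟩ := i
    have hi' : 2 ≤ iv := hi
    interval_cases iv
    · exact m2
    · exact m3
    · exact m4
    · exact m5
    · exact m6
    · exact m7
    · exact m8
    · exact m9
  have keyu : ∀ v, v ∈ J → v ∉ Au' → ¬ F.Adj u v := by
    intro v hv hv' hadj
    exact hv' (hAuAu' (Finset.mem_filter.2 ⟨hv, hadj⟩))
  have keyw : ∀ v, v ∈ J → v ∉ Aw' → ¬ F.Adj w v := by
    intro v hv hv' hadj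
    exact hv' (hAwAw' (Finset.mem_filter.2 ⟨hv, hadj⟩))
  have n25 : x2 ∉ Aw' := fun h => hAA.forall_ne_finset hx2 h rfl
  have n35 : x3 ∉ Aw' := fun h => hAA.forall_ne_finset hx3 h rfl
  have n45 : x4 ∉ Aw' := fun h => hAA.forall_ne_finset hx4 h rfl
  have hnu : ∀ i : Fin 10, 5 ≤ i.val → ¬ F.Adj u (f i) := by
    intro i hi
    obtain ⟨iv, hlt⟩ := i
    have hi' : 5 ≤ iv := hi
    interval_cases iv
    · exact keyu _ m5 n52
    · exact keyu _ m6 n62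
    · exact keyu _ m7 n72
    · exact keyu _ m8 n82
    · exact keyu _ m9 n92
  have hnw : ∀ i : Fin 10, (2 ≤ i.val ∧ i.val ≤ 4) ∨ 8 ≤ i.val → ¬ F.Adj w (f i) := by
    intro i hi
    obtain ⟨iv, hlt⟩ := i
    have hi' : (2 ≤ iv ∧ iv ≤ 4) ∨ 8 ≤ iv := hi
    have hi'' : 2 ≤ iv := by omega
    interval_cases iv
    · exact keyw _ m2 n25
    · exact keyw _ m3 n35
    · exact keyw _ m4 n45
    · exact absurd hi' (by omega)
    · exact absurd hi' (by omega)
    · exact absurd hi' (by omega)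
    · exact keyw _ m8 n85
    · exact keyw _ m9 n95
  have hinj : Function.Injective f := by
    set L : List (Fin 28) := [u, w, x2, x3, x4, x5, x6, x7, x8, x9] with hLdef
    have hL : L.Nodup := by
      simp only [hLdef, List.nodup_cons, List.mem_cons, List.not_mem_nil, or_false, not_or,
        List.nodup_nil, and_true, List.mem_singleton]
      exact ⟨⟨huw,du2,du3,du4,du5,du6,du7,du8,du9⟩,⟨dw2,dw3,dw4,dw5,dw6,dw7,dw8,dw9⟩,
        ⟨h23,h24,d25,d26,d27,d28,d29⟩,⟨h34,d35,d36,d37,d38,d39⟩,⟨d45,d46,d47,d48,d49⟩,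
        ⟨h56,h57,d58,d59⟩,⟨h67,d68,d69⟩,⟨d78,d79⟩,⟨h89, not_false⟩⟩
    have peval : ∀ i : Fin 10, f i = L.get ⟨i.val, i.isLt⟩ := by
      intro i
      obtain ⟨iv, hlt⟩ := i
      interval_cases iv <;> rfl
    intro i j h
    rw [peval, peval] at h
    simpa using List.nodup_iff_injective_get.1 hL h
  refine ⟨f, hinj, fun a b hab => ?_⟩
  rw [SimpleGraph.compl_adj]
  refine ⟨fun h => (KMD_adj.1 hab).1 (hinj h), ?_⟩
  have fa0 : a.val = 0 → f a = u := by
    intro h; obtain ⟨av, hlt⟩ := a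
    have : av = 0 := h
    subst this; rfl
  have fa1 : a.val = 1 → f a = w := by
    intro h; obtain ⟨av, hlt⟩ := a
    have : av = 1 := h
    subst this; rfl
  have fb0 : b.val = 0 → f b = u := by
    intro h; obtain ⟨bv, hlt⟩ := b
    have : bv = 0 := h
    subst this; rfl
  have fb1 : b.val = 1 → f b = w := by
    intro h; obtain ⟨bv, hlt⟩ := b
    have : bv = 1 := h
    subst this; rfl
  rcases KMD_cases hab with ⟨h1, h2⟩ | ⟨h1, h2⟩ | ⟨h1, h2⟩ | ⟨h1, h2⟩ | ⟨h1, h2⟩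
  · exact hJ _ (hfJ a h1) _ (hfJ b h2)
  · rw [fa0 h1]; exact hnu b h2
  · rw [fb0 h1]; exact fun h => hnu a h2 (F.adj_symm h)
  · rw [fa1 h1]; exact hnw b h2
  · rw [fb1 h1]; exact fun h => hnw a h2 (F.adj_symm h)

set_option maxHeartbeats 4000000 in
lemma good_pair_exists (hF : F.CliqueFree 3) {I : Finset (Fin 28)}
    (hIind : Ind F I) (hIcard : I.card = 8) :
    ∃ J u w, GoodPair F J u w := by
  by_contra Hno
  push_neg at Hno
  -- Step 0: no independent 9-set
  have hNo9 : ∀ J, Ind F J → J.card ≤ 8 := by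
    intro J hJ
    by_contra hc
    push_neg at hc
    obtain ⟨J9, hJ9sub, hJ9card⟩ := Finset.exists_subset_card_eq (s := J) (n := 9) (by omega)
    have hJ9 : Ind F J9 := Ind.mono hJ9sub hJ
    have hfe : ∀ w ∈ J9, (J9.erase w).filter (F.Adj w) = ∅ := by
      intro w hw
      refine Finset.filter_eq_empty_iff.2 (fun {x} hx => ?_)
      exact hJ9 w hw x (Finset.erase_subset _ _ hx)
    by_cases hcase : ∃ u, u ∉ J9 ∧ (J9.filter (F.Adj u)).card ≤ 4
    · obtain ⟨u, huJ9, hu4⟩ := hcase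
      by_cases h4 : (J9.filter (F.Adj u)).card = 4
      · have hne : (J9.filter (F.Adj u)).Nonempty := by
          rw [← Finset.card_pos, h4]; omega
        obtain ⟨w, hw⟩ := hne
        have hwJ9 : w ∈ J9 := (Finset.mem_filter.1 hw).1
        refine Hno (J9.erase w) u w ⟨Ind.mono (Finset.erase_subset _ _) hJ9, ?_, ?_, ?_, ?_, ?_, ?_, ?_⟩
        · rw [Finset.card_erase_of_mem hwJ9, hJ9card]
        · exact fun h => huJ9 (Finset.erase_subset _ _ h)
        · exact Finset.notMem_erase _ _
        · exact fun h => huJ9 (h ▸ hwJ9)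
        · rw [Finset.filter_erase, Finset.card_erase_of_mem hw, h4]
        · rw [hfe w hwJ9]; simp
        · rw [hfe w hwJ9, Finset.inter_empty]
      · obtain ⟨w, hwd⟩ : (J9 \ J9.filter (F.Adj u)).Nonempty := by
          rw [← Finset.card_pos, Finset.card_sdiff_of_subset (Finset.filter_subset _ _), hJ9card]
          omega
        have hwJ9 : w ∈ J9 := (Finset.mem_sdiff.1 hwd).1
        have hwnf : w ∉ J9.filter (F.Adj u) := (Finset.mem_sdiff.1 hwd).2
        refine Hno (J9.erase w) u w ⟨Ind.mono (Finset.erase_subset _ _) hJ9, ?_, ?_, ?_, ?_, ?_, ?_, ?_⟩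
        · rw [Finset.card_erase_of_mem hwJ9, hJ9card]
        · exact fun h => huJ9 (Finset.erase_subset _ _ h)
        · exact Finset.notMem_erase _ _
        · exact fun h => huJ9 (h ▸ hwJ9)
        · rw [Finset.filter_erase, Finset.erase_eq_of_notMem hwnf]; omega
        · rw [hfe w hwJ9]; simp
        · rw [hfe w hwJ9, Finset.inter_empty]
    · push_neg at hcase
      have hsum1 : 95 ≤ ∑ u ∈ Finset.univ \ J9, (J9.filter (F.Adj u)).card := by
        have hc19 : (Finset.univ \ J9).card = 19 := by
          rw [Finset.card_sdiff_of_subset (Finset.subset_univ _), Finset.card_univ, hJ9card]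
          simp
        have := Finset.card_nsmul_le_sum (Finset.univ \ J9)
          (fun u => (J9.filter (F.Adj u)).card) 5
          (fun x hx => hcase x (Finset.mem_sdiff.1 hx).2)
        rw [hc19, smul_eq_mul] at this
        omega
      rw [count_swap] at hsum1
      have hv : ∃ v ∈ J9, 11 ≤ ((Finset.univ \ J9).filter (F.Adj v)).card := by
        by_contra hv
        push_neg at hv
        have := Finset.sum_le_card_nsmul J9
          (fun v => ((Finset.univ \ J9).filter (F.Adj v)).card) 10
          (fun x hx => by
            show ((Finset.univ \ J9).filter (F.Adj x)).card ≤ 10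
            have := hv x hx; omega)
        rw [hJ9card, smul_eq_mul] at this
        omega
      obtain ⟨v, hvJ9, hv11⟩ := hv
      have hNind : Ind F ((Finset.univ \ J9).filter (F.Adj v)) := by
        intro a ha b hb
        exact nonadj_of_common hF (F.adj_symm (Finset.mem_filter.1 ha).2)
          (F.adj_symm (Finset.mem_filter.1 hb).2)
      obtain ⟨u, hu⟩ : ((Finset.univ \ J9).filter (F.Adj v)).Nonempty := by
        rw [← Finset.card_pos]; omega
      obtain ⟨w, hw⟩ : (((Finset.univ \ J9).filter (F.Adj v)).erase u).Nonempty := by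
        rw [← Finset.card_pos, Finset.card_erase_of_mem hu]; omega
      have hwN : w ∈ (Finset.univ \ J9).filter (F.Adj v) := Finset.erase_subset _ _ hw
      obtain ⟨J8, hJ8sub, hJ8card⟩ := Finset.exists_subset_card_eq
        (s := (((Finset.univ \ J9).filter (F.Adj v)).erase u).erase w) (n := 8)
        (by rw [Finset.card_erase_of_mem hw, Finset.card_erase_of_mem hu]; omega)
      have hJ8N : J8 ⊆ (Finset.univ \ J9).filter (F.Adj v) :=
        hJ8sub.trans ((Finset.erase_subset _ _).trans (Finset.erase_subset _ _))
      have hfu : J8.filter (F.Adj u) = ∅ :=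
        Finset.filter_eq_empty_iff.2 (fun {x} hx => hNind u hu x (hJ8N hx))
      have hfw : J8.filter (F.Adj w) = ∅ :=
        Finset.filter_eq_empty_iff.2 (fun {x} hx => hNind w hwN x (hJ8N hx))
      refine Hno J8 u w ⟨Ind.mono hJ8N hNind, hJ8card, ?_, ?_, ?_, ?_, ?_, ?_⟩
      · exact fun h => Finset.notMem_erase u _ ((Finset.erase_subset _ _) (hJ8sub h))
      · exact fun h => Finset.notMem_erase w _ (hJ8sub h)
      · exact fun h => (Finset.mem_erase.1 hw).1 h.symm
      · rw [hfu]; simp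
      · rw [hfw]; simp
      · rw [hfu, Finset.empty_inter]
  -- neighbour in every independent 8-set
  have hdeg : ∀ v : Fin 28, (Finset.univ.filter (F.Adj v)).card ≤ 8 := by
    intro v
    apply hNo9
    intro a ha b hb
    exact nonadj_of_common hF (F.adj_symm (Finset.mem_filter.1 ha).2)
      (F.adj_symm (Finset.mem_filter.1 hb).2)
  -- counting
  have hUcard : (Finset.univ \ I).card = 20 := by
    rw [Finset.card_sdiff_of_subset (Finset.subset_univ _), Finset.card_univ, hIcard]
    simp
  have hsumU : ∑ u ∈ Finset.univ \ I, (I.filter (F.Adj u)).card ≤ 64 := by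
    rw [count_swap]
    calc ∑ v ∈ I, ((Finset.univ \ I).filter (F.Adj v)).card
        ≤ ∑ v ∈ I, (Finset.univ.filter (F.Adj v)).card :=
          Finset.sum_le_sum (fun v _ => Finset.card_le_card
            (Finset.filter_subset_filter _ (Finset.subset_univ _)))
      _ ≤ ∑ _v ∈ I, 8 := Finset.sum_le_sum (fun v _ => hdeg v)
      _ = 64 := by rw [Finset.sum_const, hIcard]; rfl
  set S := (Finset.univ \ I).filter (fun u => (I.filter (F.Adj u)).card ≤ 3) with hSdef
  have e1 : ∑ u ∈ S, (I.filter (F.Adj u)).card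
      + ∑ u ∈ (Finset.univ \ I).filter (fun u => ¬ (I.filter (F.Adj u)).card ≤ 3),
          (I.filter (F.Adj u)).card
      = ∑ u ∈ Finset.univ \ I, (I.filter (F.Adj u)).card :=
    Finset.sum_filter_add_sum_filter_not _ _ _
  have e2 : 4 * ((Finset.univ \ I).filter
      (fun u => ¬ (I.filter (F.Adj u)).card ≤ 3)).card
      ≤ ∑ u ∈ (Finset.univ \ I).filter (fun u => ¬ (I.filter (F.Adj u)).card ≤ 3),
          (I.filter (F.Adj u)).card := by
    have := Finset.card_nsmul_le_sum ((Finset.univ \ I).filter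
      (fun u => ¬ (I.filter (F.Adj u)).card ≤ 3)) (fun u => (I.filter (F.Adj u)).card) 4
      (fun x hx => by
        show 4 ≤ (I.filter (F.Adj x)).card
        have := (Finset.mem_filter.1 hx).2
        omega)
    rw [smul_eq_mul] at this
    omega
  have e3 : S.card + ((Finset.univ \ I).filter
      (fun u => ¬ (I.filter (F.Adj u)).card ≤ 3)).card = 20 :=
    (Finset.card_filter_add_card_filter_not _).trans hUcard
  -- S facts
  have hSmem : ∀ u ∈ S, u ∉ I ∧ (I.filter (F.Adj u)).card ≤ 3 := by
    intro u hu
    have h := Finset.mem_filter.1 hu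
    exact ⟨(Finset.mem_sdiff.1 h.1).2, h.2⟩
  have hSmeet : ∀ u ∈ S, ∀ w ∈ S, u ≠ w →
      ((I.filter (F.Adj u)) ∩ (I.filter (F.Adj w))).Nonempty := by
    intro u hu w hw hne
    rw [Finset.nonempty_iff_ne_empty]
    intro hemp
    exact Hno I u w ⟨hIind, hIcard, (hSmem u hu).1, (hSmem w hw).1, hne,
      (hSmem u hu).2, (hSmem w hw).2, hemp⟩
  have hSind : Ind F S := by
    intro u hu w hw
    by_cases hne : u = w
    · subst hne; exact F.irrefl
    · obtain ⟨c, hc⟩ := hSmeet u hu w hw hne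
      exact nonadj_of_common hF (Finset.mem_filter.1 (Finset.mem_inter.1 hc).1).2
        (Finset.mem_filter.1 (Finset.mem_inter.1 hc).2).2
  have hScard : S.card ≤ 8 := hNo9 S hSind
  have hSd1 : ∀ u ∈ S, 1 ≤ (I.filter (F.Adj u)).card := by
    intro u hu
    rw [Nat.one_le_iff_ne_zero]
    intro h0
    exact empty_trace_contra hNo9 hIind hIcard (hSmem u hu).1 (Finset.card_eq_zero.1 h0)
  have hSne : S.Nonempty := by
    rw [Finset.nonempty_iff_ne_empty]
    intro h
    rw [h] at e1 e3
    simp only [Finset.sum_empty, Finset.card_empty] at e1 e3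
    omega
  obtain ⟨u₀, hu₀S, hu₀min⟩ := Finset.exists_min_image S
    (fun u => (I.filter (F.Adj u)).card) hSne
  have hu₀I : u₀ ∉ I := (hSmem u₀ hu₀S).1
  have hcases : (I.filter (F.Adj u₀)).card = 1 ∨ (I.filter (F.Adj u₀)).card = 2
      ∨ (I.filter (F.Adj u₀)).card = 3 := by
    have := hSd1 u₀ hu₀S
    have := (hSmem u₀ hu₀S).2
    omega
  rcases hcases with hd1 | hd2 | hd3
  · -- Case d u₀ = 1
    obtain ⟨x, hxeq⟩ := Finset.card_eq_one.1 hd1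
    have hxf : x ∈ I.filter (F.Adj u₀) := hxeq ▸ Finset.mem_singleton_self x
    have hxI : x ∈ I := (Finset.mem_filter.1 hxf).1
    have hadj0x : F.Adj u₀ x := (Finset.mem_filter.1 hxf).2
    -- the swapped independent 8-set J₂ = insert u₀ (I.erase x)
    have hJ₂ind : Ind F (Insert.insert u₀ (I.erase x)) := by
      refine (Ind.mono (Finset.erase_subset _ _) hIind).insert (fun b hb hadj => ?_)
      have hbe := Finset.mem_erase.1 hb
      have : b ∈ I.filter (F.Adj u₀) := Finset.mem_filter.2 ⟨hbe.2, hadj⟩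
      rw [hxeq] at this
      exact hbe.1 (Finset.mem_singleton.1 this)
    have hu₀e : u₀ ∉ I.erase x := fun h => hu₀I (Finset.erase_subset _ _ h)
    have hJ₂card : (Insert.insert u₀ (I.erase x)).card = 8 := by
      rw [Finset.card_insert_of_notMem hu₀e, Finset.card_erase_of_mem hxI, hIcard]
    -- every other member of S has d ≥ 2
    have step2 : ∀ w ∈ S.erase u₀, 2 ≤ (I.filter (F.Adj w)).card := by
      intro w hw
      by_contra hlt
      push_neg at hlt
      have hwS : w ∈ S := (Finset.mem_erase.1 hw).2
      have hwu₀ : w ≠ u₀ := (Finset.mem_erase.1 hw).1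
      have hwI : w ∉ I := (hSmem w hwS).1
      have hw1 : (I.filter (F.Adj w)).card = 1 := by
        have := hSd1 w hwS; omega
      obtain ⟨y, hyeq⟩ := Finset.card_eq_one.1 hw1
      obtain ⟨c, hc⟩ := hSmeet w hwS u₀ hu₀S hwu₀
      have hcy : c = y := by
        have := (Finset.mem_inter.1 hc).1
        rw [hyeq] at this
        exact Finset.mem_singleton.1 this
      have hcx : c = x := by
        have := (Finset.mem_inter.1 hc).2
        rw [hxeq] at this
        exact Finset.mem_singleton.1 this
      have hyx : (I.filter (F.Adj w)) = {x} := by rw [hyeq, ← hcy, hcx]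
      have hadjwx : F.Adj w x := (Finset.mem_filter.1 (hyx ▸ Finset.mem_singleton_self x)).2
      have hnadj : ¬ F.Adj w u₀ := nonadj_of_common hF hadjwx hadj0x
      have htr : (Insert.insert u₀ (I.erase x)).filter (F.Adj w) = ∅ := by
        rw [Finset.filter_insert, if_neg hnadj, Finset.filter_erase, hyx,
          Finset.erase_singleton]
      have hwJ₂ : w ∉ Insert.insert u₀ (I.erase x) := by
        intro h
        rcases Finset.mem_insert.1 h with h' | h'
        · exact hwu₀ h'
        · exact hwI (Finset.erase_subset _ _ h')
      exact empty_trace_contra hNo9 hJ₂ind hJ₂card hwJ₂ htr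
    -- arithmetic: S.card = 8 and the sum over S.erase u₀ is ≤ 15
    have hsplit1 : (I.filter (F.Adj u₀)).card
        + ∑ u ∈ S.erase u₀, (I.filter (F.Adj u)).card
        = ∑ u ∈ S, (I.filter (F.Adj u)).card := by
      simpa using Finset.add_sum_erase S (fun u => (I.filter (F.Adj u)).card) hu₀S
    have hlow2 : 2 * (S.erase u₀).card ≤ ∑ u ∈ S.erase u₀, (I.filter (F.Adj u)).card := by
      have := Finset.card_nsmul_le_sum (S.erase u₀) (fun u => (I.filter (F.Adj u)).card) 2
        (fun x hx => step2 x hx)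
      rw [smul_eq_mul] at this
      omega
    have hecard : (S.erase u₀).card = S.card - 1 := Finset.card_erase_of_mem hu₀S
    have hS8 : S.card = 8 := by omega
    have hb15 : ∑ u ∈ S.erase u₀, (I.filter (F.Adj u)).card ≤ 15 := by omega
    -- at least two vertices with d = 2
    set T := (S.erase u₀).filter (fun w => (I.filter (F.Adj w)).card = 2) with hTdef
    have hT2 : 2 ≤ T.card := by
      have f1 : ∑ u ∈ T, (I.filter (F.Adj u)).card
          + ∑ u ∈ (S.erase u₀).filter (fun w => ¬ (I.filter (F.Adj w)).card = 2),
              (I.filter (F.Adj u)).card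
          = ∑ u ∈ S.erase u₀, (I.filter (F.Adj u)).card :=
        Finset.sum_filter_add_sum_filter_not _ _ _
      have f2 : 3 * ((S.erase u₀).filter (fun w => ¬ (I.filter (F.Adj w)).card = 2)).card
          ≤ ∑ u ∈ (S.erase u₀).filter (fun w => ¬ (I.filter (F.Adj w)).card = 2),
              (I.filter (F.Adj u)).card := by
        have := Finset.card_nsmul_le_sum
          ((S.erase u₀).filter (fun w => ¬ (I.filter (F.Adj w)).card = 2))
          (fun u => (I.filter (F.Adj u)).card) 3
          (fun z hz => by
            show 3 ≤ (I.filter (F.Adj z)).card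
            have hz1 := (Finset.mem_filter.1 hz).1
            have hz2 := (Finset.mem_filter.1 hz).2
            have := step2 z hz1
            have := (hSmem z (Finset.mem_erase.1 hz1).2).2
            omega)
        rw [smul_eq_mul] at this
        omega
      have f3 : T.card + ((S.erase u₀).filter
          (fun w => ¬ (I.filter (F.Adj w)).card = 2)).card = (S.erase u₀).card :=
        Finset.card_filter_add_card_filter_not _
      have f4 : 2 * T.card ≤ ∑ u ∈ T, (I.filter (F.Adj u)).card := by
        have := Finset.card_nsmul_le_sum T (fun u => (I.filter (F.Adj u)).card) 2
          (fun z hz => step2 z (Finset.mem_filter.1 hz).1)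
        rw [smul_eq_mul] at this
        omega
      omega
    obtain ⟨w1, hw1T, w2, hw2T, hw12⟩ := Finset.one_lt_card.1 (by omega : 1 < T.card)
    -- common structure for members of T
    have hfact : ∀ w ∈ T, ∃ y, (Insert.insert u₀ (I.erase x)).filter (F.Adj w) = {y}
        ∧ w ∉ Insert.insert u₀ (I.erase x) := by
      intro w hwT
      have hwE := Finset.mem_filter.1 hwT
      have hwS : w ∈ S := (Finset.mem_erase.1 hwE.1).2
      have hwu₀ : w ≠ u₀ := (Finset.mem_erase.1 hwE.1).1
      have hwI : w ∉ I := (hSmem w hwS).1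
      obtain ⟨c, hc⟩ := hSmeet w hwS u₀ hu₀S hwu₀
      have hcx : c = x := by
        have := (Finset.mem_inter.1 hc).2
        rw [hxeq] at this
        exact Finset.mem_singleton.1 this
      have hxfw : x ∈ I.filter (F.Adj w) := hcx ▸ (Finset.mem_inter.1 hc).1
      have hadjwx : F.Adj w x := (Finset.mem_filter.1 hxfw).2
      have hnadj : ¬ F.Adj w u₀ := nonadj_of_common hF hadjwx hadj0x
      have her1 : ((I.filter (F.Adj w)).erase x).card = 1 := by
        rw [Finset.card_erase_of_mem hxfw, hwE.2]
      obtain ⟨y, hyeq⟩ := Finset.card_eq_one.1 her1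
      refine ⟨y, ?_, ?_⟩
      · rw [Finset.filter_insert, if_neg hnadj, Finset.filter_erase, hyeq]
      · intro h
        rcases Finset.mem_insert.1 h with h' | h'
        · exact hwu₀ h'
        · exact hwI (Finset.erase_subset _ _ h')
    obtain ⟨y1, ht1, hw1J₂⟩ := hfact w1 hw1T
    obtain ⟨y2, ht2, hw2J₂⟩ := hfact w2 hw2T
    have hy12 : y1 = y2 := by
      by_contra hne'
      exact Hno (Insert.insert u₀ (I.erase x)) w1 w2 ⟨hJ₂ind, hJ₂card, hw1J₂, hw2J₂, hw12,
        by rw [ht1]; simp, by rw [ht2]; simp,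
        by rw [ht1, ht2]
           exact Finset.singleton_inter_of_notMem (fun h => hne' (Finset.mem_singleton.1 h))⟩
    rw [← hy12] at ht2
    exact singleton_pair_contra hF hNo9 hJ₂ind hJ₂card hw1J₂ hw2J₂ hw12 ht1 ht2
  · -- Case d u₀ = 2
    have hmin2 : ∀ w ∈ S, 2 ≤ (I.filter (F.Adj w)).card := by
      intro w hw
      have := hu₀min w hw
      omega
    have hlowS : 2 * S.card ≤ ∑ u ∈ S, (I.filter (F.Adj u)).card := by
      have := Finset.card_nsmul_le_sum S (fun u => (I.filter (F.Adj u)).card) 2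
        (fun z hz => hmin2 z hz)
      rw [smul_eq_mul] at this
      omega
    have hS8 : S.card = 8 := by omega
    have hsum16 : ∑ u ∈ S, (I.filter (F.Adj u)).card ≤ 16 := by omega
    have hall2 : ∀ w ∈ S, (I.filter (F.Adj w)).card = 2 := by
      intro w hw
      have hsplitw : (I.filter (F.Adj w)).card
          + ∑ u ∈ S.erase w, (I.filter (F.Adj u)).card
          = ∑ u ∈ S, (I.filter (F.Adj u)).card := by
        simpa using Finset.add_sum_erase S (fun u => (I.filter (F.Adj u)).card) hw
      have hloww : 2 * (S.erase w).card ≤ ∑ u ∈ S.erase w, (I.filter (F.Adj u)).card := by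
        have := Finset.card_nsmul_le_sum (S.erase w) (fun u => (I.filter (F.Adj u)).card) 2
          (fun z hz => hmin2 z (Finset.mem_erase.1 hz).2)
        rw [smul_eq_mul] at this
        omega
      have hwe : (S.erase w).card = S.card - 1 := Finset.card_erase_of_mem hw
      have := hmin2 w hw
      omega
    by_cases hEq : ∃ u1 ∈ S, ∃ u2 ∈ S, u1 ≠ u2
        ∧ I.filter (F.Adj u1) = I.filter (F.Adj u2)
    · -- two vertices with the same trace {x,y}
      obtain ⟨u1, hu1S, u2, hu2S, h12, hsame⟩ := hEq
      obtain ⟨x, y, hxy, hA⟩ := Finset.card_eq_two.1 (hall2 u1 hu1S)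
      have hu1I : u1 ∉ I := (hSmem u1 hu1S).1
      have hu2I : u2 ∉ I := (hSmem u2 hu2S).1
      have hxf1 : x ∈ I.filter (F.Adj u1) := by rw [hA]; exact Finset.mem_insert_self x _
      have hyf1 : y ∈ I.filter (F.Adj u1) := by
        rw [hA]; exact Finset.mem_insert_of_mem (Finset.mem_singleton_self y)
      have hxf2 : x ∈ I.filter (F.Adj u2) := hsame ▸ hxf1
      have hyf2 : y ∈ I.filter (F.Adj u2) := hsame ▸ hyf1
      have hxI : x ∈ I := (Finset.mem_filter.1 hxf1).1
      have hyI : y ∈ I := (Finset.mem_filter.1 hyf1).1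
      have ha1x : F.Adj u1 x := (Finset.mem_filter.1 hxf1).2
      have ha1y : F.Adj u1 y := (Finset.mem_filter.1 hyf1).2
      have ha2x : F.Adj u2 x := (Finset.mem_filter.1 hxf2).2
      have ha2y : F.Adj u2 y := (Finset.mem_filter.1 hyf2).2
      have hnadj21 : ¬ F.Adj u2 u1 := nonadj_of_common hF ha2x ha1x
      -- J' = insert u2 (insert u1 ((I.erase x).erase y))
      have hbase : Ind F ((I.erase x).erase y) :=
        Ind.mono ((Finset.erase_subset _ _).trans (Finset.erase_subset _ _)) hIind
      have hins1 : Ind F (Insert.insert u1 ((I.erase x).erase y)) := by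
        refine hbase.insert (fun b hb hadj => ?_)
        have hb1 := Finset.mem_erase.1 hb
        have hb2 := Finset.mem_erase.1 hb1.2
        have : b ∈ I.filter (F.Adj u1) := Finset.mem_filter.2 ⟨hb2.2, hadj⟩
        rw [hA] at this
        rcases Finset.mem_insert.1 this with h' | h'
        · exact hb2.1 h'
        · exact hb1.1 (Finset.mem_singleton.1 h')
      have hJ'ind : Ind F (Insert.insert u2 (Insert.insert u1 ((I.erase x).erase y))) := by
        refine hins1.insert (fun b hb hadj => ?_)
        rcases Finset.mem_insert.1 hb with h' | h'
        · subst h'; exact hnadj21 hadj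
        · have hb1 := Finset.mem_erase.1 h'
          have hb2 := Finset.mem_erase.1 hb1.2
          have : b ∈ I.filter (F.Adj u2) := Finset.mem_filter.2 ⟨hb2.2, hadj⟩
          rw [← hsame, hA] at this
          rcases Finset.mem_insert.1 this with h'' | h''
          · exact hb2.1 h''
          · exact hb1.1 (Finset.mem_singleton.1 h'')
      have hyex : y ∈ I.erase x := Finset.mem_erase.2 ⟨fun h => hxy h.symm, hyI⟩
      have hu1nb : u1 ∉ (I.erase x).erase y := fun h =>
        hu1I ((Finset.erase_subset _ _) ((Finset.erase_subset _ _) h))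
      have hu2nb : u2 ∉ Insert.insert u1 ((I.erase x).erase y) := by
        intro h
        rcases Finset.mem_insert.1 h with h' | h'
        · exact h12 h'.symm
        · exact hu2I ((Finset.erase_subset _ _) ((Finset.erase_subset _ _) h'))
      have hJ'card : (Insert.insert u2 (Insert.insert u1 ((I.erase x).erase y))).card = 8 := by
        rw [Finset.card_insert_of_notMem hu2nb, Finset.card_insert_of_notMem hu1nb,
          Finset.card_erase_of_mem hyex, Finset.card_erase_of_mem hxI, hIcard]
      -- W
      have hu2e : u2 ∈ S.erase u1 := Finset.mem_erase.2 ⟨h12.symm, hu2S⟩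
      have hWcard : ((S.erase u1).erase u2).card = 6 := by
        rw [Finset.card_erase_of_mem hu2e, Finset.card_erase_of_mem hu1S, hS8]
      have hfact : ∀ w ∈ (S.erase u1).erase u2, ∃ z,
          (Insert.insert u2 (Insert.insert u1 ((I.erase x).erase y))).filter (F.Adj w) = {z}
          ∧ w ∉ Insert.insert u2 (Insert.insert u1 ((I.erase x).erase y)) := by
        intro w hwW
        have hw2 : w ≠ u2 := (Finset.mem_erase.1 hwW).1
        have hw1 : w ≠ u1 := (Finset.mem_erase.1 (Finset.mem_erase.1 hwW).2).1
        have hwS : w ∈ S := (Finset.mem_erase.1 (Finset.mem_erase.1 hwW).2).2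
        have hwI : w ∉ I := (hSmem w hwS).1
        obtain ⟨c1, hc1⟩ := hSmeet w hwS u1 hu1S hw1
        obtain ⟨c2, hc2⟩ := hSmeet w hwS u2 hu2S hw2
        have hnadjw1 : ¬ F.Adj w u1 := nonadj_of_common hF
          (Finset.mem_filter.1 (Finset.mem_inter.1 hc1).1).2
          (Finset.mem_filter.1 (Finset.mem_inter.1 hc1).2).2
        have hnadjw2 : ¬ F.Adj w u2 := nonadj_of_common hF
          (Finset.mem_filter.1 (Finset.mem_inter.1 hc2).1).2
          (Finset.mem_filter.1 (Finset.mem_inter.1 hc2).2).2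
        have htr : (Insert.insert u2 (Insert.insert u1 ((I.erase x).erase y))).filter (F.Adj w)
            = ((I.filter (F.Adj w)).erase x).erase y := by
          rw [Finset.filter_insert, if_neg hnadjw2, Finset.filter_insert, if_neg hnadjw1,
            Finset.filter_erase, Finset.filter_erase]
        have hwnJ' : w ∉ Insert.insert u2 (Insert.insert u1 ((I.erase x).erase y)) := by
          intro h
          rcases Finset.mem_insert.1 h with h' | h'
          · exact hw2 h'
          · rcases Finset.mem_insert.1 h' with h'' | h''
            · exact hw1 h''
            · exact hwI ((Finset.erase_subset _ _) ((Finset.erase_subset _ _) h''))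
        -- the trace has at most one element
        have hcxy : c1 = x ∨ c1 = y := by
          have := (Finset.mem_inter.1 hc1).2
          rw [hA] at this
          rcases Finset.mem_insert.1 this with h' | h'
          · exact Or.inl h'
          · exact Or.inr (Finset.mem_singleton.1 h')
        have hcf : c1 ∈ I.filter (F.Adj w) := (Finset.mem_inter.1 hc1).1
        have hsmall : (((I.filter (F.Adj w)).erase x).erase y).card ≤ 1 := by
          rcases hcxy with h' | h'
          · have hxm : x ∈ I.filter (F.Adj w) := h' ▸ hcf
            calc (((I.filter (F.Adj w)).erase x).erase y).card
                ≤ ((I.filter (F.Adj w)).erase x).card :=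
                  Finset.card_le_card (Finset.erase_subset _ _)
              _ = 1 := by rw [Finset.card_erase_of_mem hxm, hall2 w hwS]
          · have hym : y ∈ I.filter (F.Adj w) := h' ▸ hcf
            have hsub : ((I.filter (F.Adj w)).erase x).erase y
                ⊆ (I.filter (F.Adj w)).erase y := fun z hz =>
              Finset.mem_erase.2 ⟨(Finset.mem_erase.1 hz).1,
                (Finset.mem_erase.1 (Finset.mem_erase.1 hz).2).2⟩
            calc (((I.filter (F.Adj w)).erase x).erase y).card
                ≤ ((I.filter (F.Adj w)).erase y).card := Finset.card_le_card hsub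
              _ = 1 := by rw [Finset.card_erase_of_mem hym, hall2 w hwS]
        have h01 : (((I.filter (F.Adj w)).erase x).erase y).card = 0
            ∨ (((I.filter (F.Adj w)).erase x).erase y).card = 1 := by omega
        rcases h01 with h0 | h1
        · exfalso
          refine empty_trace_contra hNo9 hJ'ind hJ'card hwnJ' ?_
          rw [htr, Finset.card_eq_zero.1 h0]
        · obtain ⟨z, hz⟩ := Finset.card_eq_one.1 h1
          exact ⟨z, by rw [htr, hz], hwnJ'⟩
      obtain ⟨w1, hw1W, w2, hw2W, hw12⟩ := Finset.one_lt_card.1 (by omega : 1 < ((S.erase u1).erase u2).card)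
      obtain ⟨z1, ht1, hw1J'⟩ := hfact w1 hw1W
      obtain ⟨z2, ht2, hw2J'⟩ := hfact w2 hw2W
      have hz12 : z1 = z2 := by
        by_contra hne'
        exact Hno (Insert.insert u2 (Insert.insert u1 ((I.erase x).erase y))) w1 w2
          ⟨hJ'ind, hJ'card, hw1J', hw2J', hw12,
          by rw [ht1]; simp, by rw [ht2]; simp,
          by rw [ht1, ht2]
             exact Finset.singleton_inter_of_notMem (fun h => hne' (Finset.mem_singleton.1 h))⟩
      rw [← hz12] at ht2
      exact singleton_pair_contra hF hNo9 hJ'ind hJ'card hw1J' hw2J' hw12 ht1 ht2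
    · -- all traces distinct
      push_neg at hEq
      have pigeon : ∀ a : Fin 28, a ∈ I → (∀ u ∈ S, a ∈ I.filter (F.Adj u)) → False := by
        intro a haI hall
        have hm : ∀ u ∈ S, I.filter (F.Adj u)
            ∈ (I.erase a).image (fun t => Insert.insert a ({t} : Finset (Fin 28))) := by
          intro u hu
          have hax : a ∈ I.filter (F.Adj u) := hall u hu
          have h1 : ((I.filter (F.Adj u)).erase a).card = 1 := by
            rw [Finset.card_erase_of_mem hax, hall2 u hu]
          obtain ⟨t, ht⟩ := Finset.card_eq_one.1 h1
          have htm : t ∈ (I.filter (F.Adj u)).erase a := ht ▸ Finset.mem_singleton_self t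
          refine Finset.mem_image.2 ⟨t, Finset.mem_erase.2 ⟨(Finset.mem_erase.1 htm).1,
            Finset.filter_subset _ _ (Finset.mem_erase.1 htm).2⟩, ?_⟩
          rw [← ht, Finset.insert_erase hax]
        have hinj' : Set.InjOn (fun u => I.filter (F.Adj u)) ↑S := by
          intro v1 h1 v2 h2 hf
          by_contra hne
          exact hEq v1 (Finset.mem_coe.1 h1) v2 (Finset.mem_coe.1 h2) hne hf
        have hcle := Finset.card_le_card_of_injOn (fun u => I.filter (F.Adj u))
          (fun u hu => hm u hu) hinj'
        have himg := Finset.card_image_le (s := I.erase a)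
          (f := fun t => Insert.insert a ({t} : Finset (Fin 28)))
        rw [Finset.card_erase_of_mem haI, hIcard] at himg
        omega
      obtain ⟨u1, hu1S⟩ := hSne
      obtain ⟨a, b, hab, hA1⟩ := Finset.card_eq_two.1 (hall2 u1 hu1S)
      have haf1 : a ∈ I.filter (F.Adj u1) := by rw [hA1]; exact Finset.mem_insert_self a _
      have hbf1 : b ∈ I.filter (F.Adj u1) := by
        rw [hA1]; exact Finset.mem_insert_of_mem (Finset.mem_singleton_self b)
      have haI : a ∈ I := (Finset.mem_filter.1 haf1).1
      have hbI : b ∈ I := (Finset.mem_filter.1 hbf1).1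
      by_cases hca : ∀ u ∈ S, a ∈ I.filter (F.Adj u)
      · exact pigeon a haI hca
      push_neg at hca
      obtain ⟨u2, hu2S, ha2⟩ := hca
      have h12 : u1 ≠ u2 := fun h => ha2 (h ▸ haf1)
      obtain ⟨c1, hc1⟩ := hSmeet u1 hu1S u2 hu2S h12
      have hbf2 : b ∈ I.filter (F.Adj u2) := by
        have hm1 := (Finset.mem_inter.1 hc1).1
        have hm2 := (Finset.mem_inter.1 hc1).2
        rw [hA1] at hm1
        rcases Finset.mem_insert.1 hm1 with h' | h'
        · exact absurd (h' ▸ hm2) ha2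
        · exact (Finset.mem_singleton.1 h') ▸ hm2
      have h1 : ((I.filter (F.Adj u2)).erase b).card = 1 := by
        rw [Finset.card_erase_of_mem hbf2, hall2 u2 hu2S]
      obtain ⟨c, hcc⟩ := Finset.card_eq_one.1 h1
      have hcm : c ∈ (I.filter (F.Adj u2)).erase b := hcc ▸ Finset.mem_singleton_self c
      have hA2 : I.filter (F.Adj u2) = ({b, c} : Finset (Fin 28)) := by
        rw [← Finset.insert_erase hbf2, hcc]
      have hcb : c ≠ b := (Finset.mem_erase.1 hcm).1
      have hcf2 : c ∈ I.filter (F.Adj u2) := (Finset.mem_erase.1 hcm).2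
      have hca' : c ≠ a := fun h => ha2 (h ▸ hcf2)
      by_cases hcb' : ∀ u ∈ S, b ∈ I.filter (F.Adj u)
      · exact pigeon b hbI hcb'
      push_neg at hcb'
      obtain ⟨u3, hu3S, hb3⟩ := hcb'
      have h13 : u1 ≠ u3 := fun h => hb3 (h ▸ hbf1)
      have h23 : u2 ≠ u3 := fun h => hb3 (h ▸ hbf2)
      obtain ⟨d1, hd1'⟩ := hSmeet u1 hu1S u3 hu3S h13
      have ha3 : a ∈ I.filter (F.Adj u3) := by
        have hm1 := (Finset.mem_inter.1 hd1').1
        have hm2 := (Finset.mem_inter.1 hd1').2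
        rw [hA1] at hm1
        rcases Finset.mem_insert.1 hm1 with h' | h'
        · exact h' ▸ hm2
        · exact absurd ((Finset.mem_singleton.1 h') ▸ hm2) hb3
      obtain ⟨d2, hd2'⟩ := hSmeet u2 hu2S u3 hu3S h23
      have hc3 : c ∈ I.filter (F.Adj u3) := by
        have hm1 := (Finset.mem_inter.1 hd2').1
        have hm2 := (Finset.mem_inter.1 hd2').2
        rw [hA2] at hm1
        rcases Finset.mem_insert.1 hm1 with h' | h'
        · exact absurd (h' ▸ hm2) hb3
        · exact (Finset.mem_singleton.1 h') ▸ hm2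
      have hac2 : ({a, c} : Finset (Fin 28)).card = 2 := by
        rw [Finset.card_insert_of_notMem (fun h => hca' (Finset.mem_singleton.1 h).symm),
          Finset.card_singleton]
      have hA3 : I.filter (F.Adj u3) = ({a, c} : Finset (Fin 28)) := by
        refine (Finset.eq_of_subset_of_card_le ?_ ?_).symm
        · exact Finset.insert_subset_iff.2 ⟨ha3, Finset.singleton_subset_iff.2 hc3⟩
        · rw [hall2 u3 hu3S, hac2]
      -- the fourth vertex
      have hns : ¬ S ⊆ ({u1, u2, u3} : Finset (Fin 28)) := by
        intro hsub
        have t0 := Finset.card_le_card hsub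
        have t1 := Finset.card_insert_le u1 ({u2, u3} : Finset (Fin 28))
        have t2 := Finset.card_insert_le u2 ({u3} : Finset (Fin 28))
        have t3 : ({u3} : Finset (Fin 28)).card = 1 := Finset.card_singleton _
        omega
      obtain ⟨u4, hu4S, hu4n⟩ := Finset.not_subset.1 hns
      have h41 : u4 ≠ u1 := fun h => hu4n (by rw [h]; exact Finset.mem_insert_self _ _)
      have h42 : u4 ≠ u2 := fun h => hu4n (by rw [h]; simp)
      have h43 : u4 ≠ u3 := fun h => hu4n (by rw [h]; simp)
      obtain ⟨p, q, hpq, hA4⟩ := Finset.card_eq_two.1 (hall2 u4 hu4S)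
      have e4_1 : (p = a ∨ p = b) ∨ (q = a ∨ q = b) := by
        obtain ⟨c4, hc4⟩ := hSmeet u4 hu4S u1 hu1S h41
        have hm1 := (Finset.mem_inter.1 hc4).1
        have hm2 := (Finset.mem_inter.1 hc4).2
        rw [hA4] at hm1
        rw [hA1] at hm2
        simp only [Finset.mem_insert, Finset.mem_singleton] at hm1 hm2
        rcases hm1 with rfl | rfl
        · exact Or.inl hm2
        · exact Or.inr hm2
      have e4_2 : (p = b ∨ p = c) ∨ (q = b ∨ q = c) := by
        obtain ⟨c4, hc4⟩ := hSmeet u4 hu4S u2 hu2S h42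
        have hm1 := (Finset.mem_inter.1 hc4).1
        have hm2 := (Finset.mem_inter.1 hc4).2
        rw [hA4] at hm1
        rw [hA2] at hm2
        simp only [Finset.mem_insert, Finset.mem_singleton] at hm1 hm2
        rcases hm1 with rfl | rfl
        · exact Or.inl hm2
        · exact Or.inr hm2
      have e4_3 : (p = a ∨ p = c) ∨ (q = a ∨ q = c) := by
        obtain ⟨c4, hc4⟩ := hSmeet u4 hu4S u3 hu3S h43
        have hm1 := (Finset.mem_inter.1 hc4).1
        have hm2 := (Finset.mem_inter.1 hc4).2
        rw [hA4] at hm1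
        rw [hA3] at hm2
        simp only [Finset.mem_insert, Finset.mem_singleton] at hm1 hm2
        rcases hm1 with rfl | rfl
        · exact Or.inl hm2
        · exact Or.inr hm2
      have key : (p = a ∧ q = b) ∨ (q = a ∧ p = b) ∨ (p = b ∧ q = c) ∨ (q = b ∧ p = c)
          ∨ (p = a ∧ q = c) ∨ (q = a ∧ p = c) := by
        rcases e4_1 with (h1 | h1) | (h1 | h1)
        · subst h1
          rcases e4_2 with (h2 | h2) | (h2 | h2)
          · exact absurd h2 hab
          · exact absurd h2.symm hca'
          · exact Or.inl ⟨rfl, h2⟩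
          · exact Or.inr (Or.inr (Or.inr (Or.inr (Or.inl ⟨rfl, h2⟩))))
        · subst h1
          rcases e4_3 with (h2 | h2) | (h2 | h2)
          · exact absurd h2.symm hab
          · exact absurd h2.symm hcb
          · exact Or.inr (Or.inl ⟨h2, rfl⟩)
          · exact Or.inr (Or.inr (Or.inl ⟨rfl, h2⟩))
        · subst h1
          rcases e4_2 with (h2 | h2) | (h2 | h2)
          · exact Or.inr (Or.inl ⟨rfl, h2⟩)
          · exact Or.inr (Or.inr (Or.inr (Or.inr (Or.inr ⟨rfl, h2⟩))))
          · exact absurd h2 hab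
          · exact absurd h2.symm hca'
        · subst h1
          rcases e4_3 with (h2 | h2) | (h2 | h2)
          · exact Or.inl ⟨h2, rfl⟩
          · exact Or.inr (Or.inr (Or.inr (Or.inl ⟨rfl, h2⟩)))
          · exact absurd h2.symm hab
          · exact absurd h2.symm hcb
      rcases key with ⟨h1', h2'⟩ | ⟨h1', h2'⟩ | ⟨h1', h2'⟩ | ⟨h1', h2'⟩ | ⟨h1', h2'⟩ | ⟨h1', h2'⟩
      · subst h1'; subst h2'
        exact hEq u4 hu4S u1 hu1S h41 (hA4.trans hA1.symm)
      · subst h1'; subst h2'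
        exact hEq u4 hu4S u1 hu1S h41 (hA4.trans ((Finset.pair_comm _ _).trans hA1.symm))
      · subst h1'; subst h2'
        exact hEq u4 hu4S u2 hu2S h42 (hA4.trans hA2.symm)
      · subst h1'; subst h2'
        exact hEq u4 hu4S u2 hu2S h42 (hA4.trans ((Finset.pair_comm _ _).trans hA2.symm))
      · subst h1'; subst h2'
        exact hEq u4 hu4S u3 hu3S h43 (hA4.trans hA3.symm)
      · subst h1'; subst h2'
        exact hEq u4 hu4S u3 hu3S h43 (hA4.trans ((Finset.pair_comm _ _).trans hA3.symm))

  · -- Case d = 3 : impossible by counting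
    have hmin3 : ∀ w ∈ S, 3 ≤ (I.filter (F.Adj w)).card := by
      intro w hw
      have := hu₀min w hw
      omega
    have hlow : 3 * S.card ≤ ∑ u ∈ S, (I.filter (F.Adj u)).card := by
      have := Finset.card_nsmul_le_sum S (fun u => (I.filter (F.Adj u)).card) 3
        (fun x hx => hmin3 x hx)
      rw [smul_eq_mul] at this
      omega
    omega

end Helpers

theorem stmt7 (h8 : TriRamsey (⊤ : SimpleGraph (Fin 8)) 28) :
    TriRamsey (KnMinusDoubleStar 10 3) 28 := by
  obtain ⟨h8mem, h8lb⟩ := h8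
  constructor
  · -- upper bound: RamseyProp at 28
    show RamseyProp (KnMinusDoubleStar 10 3) 28
    intro F
    by_cases h3 : F.CliqueFree 3
    · right
      haveI : DecidableRel F.Adj := Classical.decRel _
      rcases h8mem F with hF | ⟨g, hginj, hgadj⟩
      · exact absurd h3 hF
      · have hIind : Ind F (Finset.univ.image g) := by
          intro a ha b hb hadj
          obtain ⟨i, _, rfl⟩ := Finset.mem_image.1 ha
          obtain ⟨j, _, rfl⟩ := Finset.mem_image.1 hb
          by_cases hij : i = j
          · subst hij; exact F.irrefl hadj
          · have h := hgadj (by simp [hij] : (⊤ : SimpleGraph (Fin 8)).Adj i j)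
            rw [SimpleGraph.compl_adj] at h
            exact h.2 hadj
        have hIcard : (Finset.univ.image g).card = 8 := by
          rw [Finset.card_image_of_injective _ hginj, Finset.card_univ]
          simp
        obtain ⟨J, u, w, hgp⟩ := good_pair_exists h3 hIind hIcard
        exact contains_of_goodPair hgp.1 hgp.2.1 hgp.2.2.1 hgp.2.2.2.1 hgp.2.2.2.2.1
          hgp.2.2.2.2.2.1 hgp.2.2.2.2.2.2.1 hgp.2.2.2.2.2.2.2
    · exact Or.inl h3
  · -- lower bound
    intro r hr
    apply h8lb
    show RamseyProp (⊤ : SimpleGraph (Fin 8)) r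
    intro F
    rcases hr F with hF | hcon
    · exact Or.inl hF
    · right
      obtain ⟨f, hfinj, hfadj⟩ := hcon
      set f8 : Fin 8 → Fin 10 := fun i => ⟨i.val + 2, by omega⟩ with hf8
      have hv : ∀ i : Fin 8, (f8 i).val = i.val + 2 := fun i => rfl
      refine ⟨fun i => f (f8 i), ?_, ?_⟩
      · intro i j hij
        have h1 := hfinj hij
        have h2 : (f8 i).val = (f8 j).val := congrArg Fin.val h1
        rw [hv, hv] at h2
        exact Fin.ext (by omega)
      · intro a b hab
        have hne : a ≠ b := hab.ne
        apply hfadj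
        rw [KMD_adj]
        constructor
        · intro h
          apply hne
          have h2 : (f8 a).val = (f8 b).val := congrArg Fin.val h
          rw [hv, hv] at h2
          exact Fin.ext (by omega)
        · intro h
          rw [hv, hv] at h
          omega
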